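/- Let n ≥ 1, let L ≥ 1, let (Y,d) be a metric space, and let G: Y → ℝⁿ be a map. Suppose that for every z ∈ Y and every i ∈ {1,…,n} there exists an L-bi-Lipschitz line l: ℝ → Y with l(0) = z and G(l(t)) = G(z) + t·eᵢ for all t ∈ ℝ, where eᵢ denotes the i-th standard basis vector of ℝⁿ. Then for every z ∈ Y and every p ∈ ℝⁿ there exists w ∈ Y with G(w) = p and d(z, w) ≤ L·√n·‖G(z) − p‖, where ‖·‖ is the Euclidean norm. -/

import Mathlib

open Metric

/-- If through every point of `Y` there pass `L`-bi-Lipschitz lines along which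
`G` moves linearly in each of the `n` coordinate directions, then every value
`p ∈ ℝⁿ` is attained at distance at most `L √n ‖G z − p‖` from any point `z`. -/
theorem reach_value_along_biLipschitz_lines
    {Y : Type*} [MetricSpace Y] (n : ℕ) (hn : 1 ≤ n) (L : ℝ) (hL : 1 ≤ L)
    (G : Y → EuclideanSpace ℝ (Fin n))
    (h : ∀ (z : Y) (i : Fin n), ∃ l : ℝ → Y, l 0 = z ∧
      (∀ s t : ℝ, L⁻¹ * |s - t| ≤ dist (l s) (l t) ∧ dist (l s) (l t) ≤ L * |s - t|) ∧
      (∀ t : ℝ, G (l t) = G z + t • EuclideanSpace.single i (1 : ℝ))) :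
    ∀ (z : Y) (p : EuclideanSpace ℝ (Fin n)), ∃ w : Y,
      G w = p ∧ dist z w ≤ L * Real.sqrt n * ‖G z - p‖ := by
  intro z p
  have hL0 : (0:ℝ) ≤ L := le_trans zero_le_one hL
  -- Step: fix coordinates one at a time.
  have key : ∀ k : ℕ, k ≤ n → ∃ w : Y,
      (∀ i : Fin n, (i : ℕ) < k → G w i = p i) ∧
      (∀ i : Fin n, k ≤ (i : ℕ) → G w i = G z i) ∧
      dist z w ≤ L * ∑ i : Fin n, (if (i : ℕ) < k then |G z i - p i| else 0) := by
    intro k hk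
    induction k with
    | zero =>
      refine ⟨z, by omega, fun i _ => rfl, ?_⟩
      simp
    | succ k ih =>
      obtain ⟨w, hlt, hge, hdist⟩ := ih (by omega)
      set i : Fin n := ⟨k, by omega⟩
      obtain ⟨l, hl0, hlip, hG⟩ := h w i
      set t : ℝ := p i - G z i with ht
      refine ⟨l t, ?_, ?_, ?_⟩
      · intro j hj
        have := congrArg (fun v => v j) (hG t)
        simp only [PiLp.add_apply, PiLp.smul_apply, EuclideanSpace.single_apply,
          smul_eq_mul] at this
        rcases eq_or_lt_of_le (Nat.lt_succ_iff.mp hj) with hji | hji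
        · have hji' : j = i := Fin.ext hji
          rw [this, hji', if_pos rfl, hge i le_rfl]
          simp [t]
        · rw [this, if_neg (by simp only [i, Fin.ext_iff, Fin.val_mk]; omega),
            mul_zero, add_zero]
          exact hlt j hji
      · intro j hj
        have := congrArg (fun v => v j) (hG t)
        simp only [PiLp.add_apply, PiLp.smul_apply, EuclideanSpace.single_apply,
          smul_eq_mul] at this
        rw [this, if_neg (by simp only [i, Fin.ext_iff, Fin.val_mk]; omega),
          mul_zero, add_zero]
        exact hge j (by omega)
      · have hstep : dist w (l t) ≤ L * |t| := by
          have := (hlip 0 t).2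
          rw [hl0] at this
          simpa [abs_sub_comm] using this
        calc dist z (l t) ≤ dist z w + dist w (l t) := dist_triangle _ _ _
          _ ≤ L * ∑ j : Fin n, (if (j : ℕ) < k then |G z j - p j| else 0) + L * |t| := by
              gcongr
          _ = L * (∑ j : Fin n, (if (j : ℕ) < k then |G z j - p j| else 0) + |t|) := by ring
          _ ≤ L * ∑ j : Fin n, (if (j : ℕ) < k + 1 then |G z j - p j| else 0) := by
              gcongr
              have : ∑ j : Fin n, (if (j : ℕ) < k + 1 then |G z j - p j| else 0)
                  = ∑ j : Fin n, ((if (j : ℕ) < k then |G z j - p j| else 0)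
                    + (if (j : ℕ) = k then |G z j - p j| else 0)) := by
                apply Finset.sum_congr rfl
                intro j _
                by_cases h1 : (j : ℕ) < k
                · rw [if_pos h1, if_pos (by omega), if_neg (by omega), add_zero]
                · by_cases h2 : (j : ℕ) = k
                  · rw [if_neg h1, if_pos (by omega), if_pos h2, zero_add]
                  · rw [if_neg h1, if_neg (by omega), if_neg h2, add_zero]
              rw [this, Finset.sum_add_distrib]
              gcongr
              have : ∑ j : Fin n, (if (j : ℕ) = k then |G z j - p j| else 0)
                  = |G z i - p i| := by
                rw [Finset.sum_eq_single i]
                · simp [i]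
                · intro b _ hb
                  rw [if_neg (by intro hcon; exact hb (Fin.ext (by simp [i, hcon])))]
                · simp
              rw [this, ht, abs_sub_comm]
  obtain ⟨w, hlt, _, hdist⟩ := key n le_rfl
  refine ⟨w, ?_, ?_⟩
  · exact PiLp.ext (fun j => hlt j j.isLt)
  · have hsum : ∑ i : Fin n, (if (i : ℕ) < n then |G z i - p i| else 0)
        = ∑ i : Fin n, |G z i - p i| := by
      apply Finset.sum_congr rfl
      intro j _; rw [if_pos j.isLt]
    rw [hsum] at hdist
    refine hdist.trans ?_
    rw [mul_assoc]
    gcongr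
    -- ∑ |x i| ≤ √n * ‖x‖
    have hnorm : ‖G z - p‖ = Real.sqrt (∑ i : Fin n, |G z i - p i| ^ 2) := by
      rw [EuclideanSpace.norm_eq]
      congr 1
    rw [hnorm, ← Real.sqrt_mul (by positivity)]
    rw [show (∑ i : Fin n, |G z i - p i|) =
      Real.sqrt ((∑ i : Fin n, |G z i - p i|) ^ 2) by
        rw [Real.sqrt_sq (by positivity)]]
    apply Real.sqrt_le_sqrt
    have := sq_sum_le_card_mul_sum_sq (s := (Finset.univ : Finset (Fin n)))
      (f := fun i => |G z i - p i|)
    simp only [Finset.card_univ, Fintype.card_fin] at this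
    exact this
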